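/- The asymptotic density b_1(k) of the set {n ∈ ℕ : r(2n+2) − r(2n+1) = k} equals 0 for k > 1, equals 1/4 for k = 1, and equals 3·2^{k−3} for k < 1 (k an integer). -/

import Mathlib

/-- `r n` counts indices `j ≥ 0` with the `j`-th and `(j+1)`-st binary digits of `n` both `1`. -/
def r (n : ℕ) : ℕ :=
  ((Finset.range (n + 1)).filter (fun j => n.testBit j ∧ n.testBit (j + 1))).card

/-- `A` has asymptotic density `c`. -/
def HasDensity (P : ℕ → Prop) [DecidablePred P] (c : ℝ) : Prop :=
  Filter.Tendsto (fun x : ℕ => (((Finset.range x).filter P).card : ℝ) / x)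
    Filter.atTop (nhds c)

open Finset

lemma r_eq_sum (n N : ℕ) (h : n < N) :
    r n = ∑ j ∈ range N, (if n.testBit j ∧ n.testBit (j + 1) then 1 else 0) := by
  rw [r, Finset.card_filter]
  apply Finset.sum_subset
  · exact Finset.range_subset_range.2 h
  · intro j hj hj'
    have hjn : n < 2 ^ j := by
      have : n + 1 ≤ j := by simpa [Finset.mem_range] using hj'
      calc n < 2 ^ n := n.lt_two_pow_self
        _ ≤ 2 ^ j := Nat.pow_le_pow_right (by norm_num) (by omega)
    simp [Nat.testBit_lt_two_pow hjn]

lemma r_two_mul (m : ℕ) : r (2 * m) = r m := by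
  rcases Nat.eq_zero_or_pos m with h | h
  · subst h; rfl
  rw [r_eq_sum (2 * m) (2 * m + 1) (by omega), Finset.sum_range_succ']
  have h0 : ¬ ((2 * m).testBit 0 ∧ (2 * m).testBit 1) := by
    intro ⟨h1, _⟩
    rw [Nat.testBit_zero] at h1
    have : 2 * m % 2 = 1 := by simpa using h1
    omega
  rw [if_neg h0, add_zero, r_eq_sum m (2 * m) (by omega)]
  apply Finset.sum_congr rfl
  intro j _
  have e1 : (2 * m).testBit (j + 1) = m.testBit j := by
    rw [Nat.testBit_succ]; congr 1; omega
  have e2 : (2 * m).testBit (j + 2) = m.testBit (j + 1) := by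
    rw [Nat.testBit_succ]; congr 1; omega
  rw [e1, e2]

lemma r_two_mul_add_one (m : ℕ) : r (2 * m + 1) = r m + m % 2 := by
  rw [r_eq_sum (2 * m + 1) (2 * m + 2) (by omega), Finset.sum_range_succ']
  have e1 : ∀ j, (2 * m + 1).testBit (j + 1) = m.testBit j := by
    intro j; rw [Nat.testBit_succ]; congr 1; omega
  have h0 : ((2 * m + 1).testBit 0 ∧ (2 * m + 1).testBit 1) ↔ m % 2 = 1 := by
    rw [Nat.testBit_zero, e1 0, Nat.testBit_zero]
    simp
  have hsum : ∑ j ∈ range (2 * m + 1),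
      (if (2 * m + 1).testBit (j + 1) ∧ (2 * m + 1).testBit (j + 1 + 1) then 1 else 0)
      = r m := by
    rw [r_eq_sum m (2 * m + 1) (by omega)]
    apply Finset.sum_congr rfl
    intro j _
    rw [e1 j, e1 (j + 1)]
  rw [hsum]
  by_cases hm : m % 2 = 1
  · rw [if_pos (h0.2 hm), hm]
  · rw [if_neg (fun hx => hm (h0.1 hx))]; omega

def D (n : ℕ) : ℤ := (r (n + 1) : ℤ) - (r n : ℤ) - (n % 2 : ℕ)

lemma target_eq (n : ℕ) : (r (2 * n + 2) : ℤ) - (r (2 * n + 1) : ℤ) = D n := by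
  have h1 : 2 * n + 2 = 2 * (n + 1) := by ring
  rw [h1, r_two_mul, r_two_mul_add_one, D]
  push_cast
  ring

lemma D_four_mul (m : ℕ) : D (4 * m) = 0 := by
  have e1 : r (4 * m) = r m := by
    rw [show 4 * m = 2 * (2 * m) by ring, r_two_mul, r_two_mul]
  have e2 : r (4 * m + 1) = r m := by
    rw [show 4 * m + 1 = 2 * (2 * m) + 1 by ring, r_two_mul_add_one, r_two_mul]
    omega
  rw [D, e1, e2, show (4 * m) % 2 = 0 by omega]
  push_cast; ring

lemma D_four_mul_add_two (m : ℕ) : D (4 * m + 2) = 1 := by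
  have e1 : r (4 * m + 2) = r m + m % 2 := by
    rw [show 4 * m + 2 = 2 * (2 * m + 1) by ring, r_two_mul, r_two_mul_add_one]
  have e2 : r (4 * m + 2 + 1) = r m + m % 2 + 1 := by
    rw [show 4 * m + 2 + 1 = 2 * (2 * m + 1) + 1 by ring, r_two_mul_add_one,
      r_two_mul_add_one]
    omega
  rw [D, e1, e2, show (4 * m + 2) % 2 = 0 by omega]
  push_cast; ring

lemma D_odd (u : ℕ) : D (2 * u + 1) = D u - 1 := by
  have e1 : r (2 * u + 1 + 1) = r (u + 1) := by
    rw [show 2 * u + 1 + 1 = 2 * (u + 1) by ring, r_two_mul]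
  rw [D, D, e1, r_two_mul_add_one, show (2 * u + 1) % 2 = 1 by omega]
  push_cast
  ring

lemma D_le_one (n : ℕ) : D n ≤ 1 := by
  induction n using Nat.strong_induction_on with
  | _ n ih =>
    rcases Nat.lt_or_ge n 1 with h | h
    · interval_cases n; rw [show (0:ℕ) = 4 * 0 from rfl, D_four_mul]; norm_num
    by_cases hp : n % 2 = 1
    · have hn : n = 2 * (n / 2) + 1 := by omega
      rw [hn, D_odd]
      have := ih (n / 2) (by omega)
      omega
    · rcases (by omega : n % 4 = 0 ∨ n % 4 = 2) with h4 | h4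
      · rw [show n = 4 * (n / 4) by omega, D_four_mul]; norm_num
      · rw [show n = 4 * (n / 4) + 2 by omega, D_four_mul_add_two]

lemma D_eq_one_iff (n : ℕ) : D n = 1 ↔ n % 4 = 2 := by
  by_cases hp : n % 2 = 1
  · have hn : n = 2 * (n / 2) + 1 := by omega
    rw [hn, D_odd]
    have := D_le_one (n / 2)
    constructor
    · intro h; omega
    · intro h; omega
  · rcases (by omega : n % 4 = 0 ∨ n % 4 = 2) with h4 | h4
    · rw [show n = 4 * (n / 4) by omega, D_four_mul]
      constructor
      · intro h; omega
      · intro h; omega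
    · rw [show n = 4 * (n / 4) + 2 by omega, D_four_mul_add_two]
      simp

lemma odd_mod (u m : ℕ) (hm : 0 < m) : (2 * u + 1) % (2 * m) = 2 * (u % m) + 1 := by
  have h := Nat.mod_lt u hm
  conv_lhs => rw [← Nat.div_add_mod u m]
  have key : 2 * (m * (u / m) + u % m) + 1 = 2 * (u % m) + 1 + (2 * m) * (u / m) := by ring
  rw [key, Nat.add_mul_mod_self_left, Nat.mod_eq_of_lt (by omega)]

lemma mod_pow_parity (n k : ℕ) : (n % 2 ^ (k + 1)) % 2 = n % 2 :=
  Nat.mod_mod_of_dvd n (dvd_pow_self 2 (Nat.succ_ne_zero k))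

lemma D_char (n : ℕ) : ∀ t : ℕ, D n = -(t : ℤ) ↔
    (n % 2 ^ (t + 2) = 2 ^ t - 1 ∨ n % 2 ^ (t + 3) = 2 ^ (t + 2) + 2 ^ (t + 1) - 1) := by
  induction n using Nat.strong_induction_on with
  | _ n ih =>
    intro t
    by_cases hp : n % 2 = 1
    · -- odd case
      set u := n / 2 with hu
      have hn : n = 2 * u + 1 := by omega
      have hult : u < n := by omega
      rw [hn, D_odd]
      cases t with
      | zero =>
        have h1 := (D_eq_one_iff u)
        constructor
        · intro h
          have : D u = 1 := by omega
          have h2 := h1.1 this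
          right
          rw [show (2:ℕ) ^ (0 + 3) = 2 * 4 by norm_num, odd_mod u 4 (by norm_num)]
          omega
        · intro h
          rcases h with h | h
          · exfalso
            rw [show (2:ℕ) ^ (0 + 2) = 2 * 2 by norm_num, odd_mod u 2 (by norm_num)] at h
            simp at h
          · rw [show (2:ℕ) ^ (0 + 3) = 2 * 4 by norm_num, odd_mod u 4 (by norm_num)] at h
            have : u % 4 = 2 := by omega
            have := h1.2 this
            omega
      | succ s =>
        have ihu := ih u hult s
        have e1 : (2 * u + 1) % 2 ^ (s + 1 + 2) = 2 * (u % 2 ^ (s + 2)) + 1 := by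
          rw [show (2:ℕ) ^ (s + 1 + 2) = 2 * 2 ^ (s + 2) by ring, odd_mod u _ (Nat.pow_pos (by norm_num))]
        have e2 : (2 * u + 1) % 2 ^ (s + 1 + 3) = 2 * (u % 2 ^ (s + 3)) + 1 := by
          rw [show (2:ℕ) ^ (s + 1 + 3) = 2 * 2 ^ (s + 3) by ring, odd_mod u _ (Nat.pow_pos (by norm_num))]
        rw [e1, e2]
        have p0 : (1:ℕ) ≤ 2 ^ s := Nat.one_le_two_pow
        have q1 : (2:ℕ) ^ (s + 1) = 2 * 2 ^ s := by ring
        have q2 : (2:ℕ) ^ (s + 2) = 2 * 2 ^ (s + 1) := by ring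
        have q3 : (2:ℕ) ^ (s + 3) = 2 * 2 ^ (s + 2) := by ring
        have q4 : (2:ℕ) ^ (s + 1 + 2) = 2 * 2 ^ (s + 2) := by ring
        have q5 : (2:ℕ) ^ (s + 1 + 3) = 2 * 2 ^ (s + 3) := by ring
        constructor
        · intro h
          have : D u = -(s : ℤ) := by push_cast at h ⊢; omega
          rcases ihu.1 this with h2 | h2
          · left; omega
          · right; omega
        · intro h
          have : D u = -(s : ℤ) := by
            apply ihu.2
            rcases h with h | h
            · left; omega
            · right; omega
          push_cast at this ⊢; omega
    · -- even case
      have hD : (n % 4 = 0 ∧ D n = 0) ∨ (n % 4 = 2 ∧ D n = 1) := by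
        rcases (by omega : n % 4 = 0 ∨ n % 4 = 2) with h4 | h4
        · left
          exact ⟨h4, by rw [show n = 4 * (n / 4) by omega]; exact D_four_mul _⟩
        · right
          exact ⟨h4, by rw [show n = 4 * (n / 4) + 2 by omega]; exact D_four_mul_add_two _⟩
      cases t with
      | zero =>
        constructor
        · intro h
          rcases hD with ⟨h4, hd⟩ | ⟨h4, hd⟩
          · left; simpa using h4
          · exfalso; rw [hd] at h; simp at h
        · intro h
          rcases h with h | h
          · rcases hD with ⟨h4, hd⟩ | ⟨h4, hd⟩
            · simpa using hd
            · exfalso; norm_num at h; omega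
          · exfalso; norm_num at h; omega
      | succ s =>
        have p0 : (1:ℕ) ≤ 2 ^ s := Nat.one_le_two_pow
        have q1 : (2:ℕ) ^ (s + 1) = 2 * 2 ^ s := by ring
        have q2 : (2:ℕ) ^ (s + 2) = 2 * 2 ^ (s + 1) := by ring
        have q3 : (2:ℕ) ^ (s + 3) = 2 * 2 ^ (s + 2) := by ring
        have q4 : (2:ℕ) ^ (s + 4) = 2 * 2 ^ (s + 3) := by ring
        have q5 : (2:ℕ) ^ (s + 1 + 2) = 2 * 2 ^ (s + 2) := by ring
        have q6 : (2:ℕ) ^ (s + 1 + 1) = 2 * 2 ^ (s + 1) := by ring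
        have q7 : (2:ℕ) ^ (s + 1 + 3) = 2 * 2 ^ (s + 1 + 2) := by ring
        constructor
        · intro h
          exfalso
          rcases hD with ⟨_, hd⟩ | ⟨_, hd⟩ <;> rw [hd] at h <;>
            · have : (s : ℤ) ≥ 0 := Int.natCast_nonneg s
              omega
        · intro h
          exfalso
          rcases h with h | h
          · have hpar : (n % 2 ^ (s + 1 + 2)) % 2 = n % 2 := mod_pow_parity n (s + 2)
            rw [h] at hpar
            omega
          · have hpar : (n % 2 ^ (s + 1 + 3)) % 2 = n % 2 := mod_pow_parity n (s + 3)
            rw [h] at hpar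
            omega

lemma hasDensity_congr {P Q : ℕ → Prop} [DecidablePred P] [DecidablePred Q]
    (h : ∀ n, P n ↔ Q n) (hQ : HasDensity Q c) : HasDensity P c := by
  have he : ∀ x : ℕ, (Finset.range x).filter P = (Finset.range x).filter Q := fun x =>
    Finset.filter_congr fun n _ => h n
  unfold HasDensity at hQ ⊢
  simpa only [he] using hQ

lemma hasDensity_false : HasDensity (fun _ : ℕ => False) 0 := by
  unfold HasDensity
  simp only [Finset.filter_false, Finset.card_empty, Nat.cast_zero, zero_div]
  exact tendsto_const_nhds

lemma hasDensity_or {P Q : ℕ → Prop} [DecidablePred P] [DecidablePred Q] {a b : ℝ}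
    (h : ∀ n, ¬(P n ∧ Q n)) (hP : HasDensity P a) (hQ : HasDensity Q b) :
    HasDensity (fun n => P n ∨ Q n) (a + b) := by
  have he : ∀ x : ℕ, (((Finset.range x).filter fun n => P n ∨ Q n).card : ℝ) / x
      = ((Finset.range x).filter P).card / x + ((Finset.range x).filter Q).card / x := by
    intro x
    have hd : Disjoint ((Finset.range x).filter P) ((Finset.range x).filter Q) := by
      rw [Finset.disjoint_filter]
      intro n _ hp hq
      exact h n ⟨hp, hq⟩
    rw [Finset.filter_or, Finset.card_union_of_disjoint hd]
    push_cast
    ring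
  unfold HasDensity at hP hQ ⊢
  simp only [he]
  exact hP.add hQ

lemma hasDensity_mod (m a : ℕ) (hm : 0 < m) (ha : a < m) :
    HasDensity (fun n => n % m = a) (1 / (m : ℝ)) := by
  have key : ∀ x : ℕ, ((Finset.range x).filter (fun n => n % m = a)).card
      = x / m + if a % m < x % m then 1 else 0 := by
    intro x
    rw [← Nat.count_modEq_card x hm a, Nat.count_eq_card_filter_range]
    congr 1
    apply Finset.filter_congr
    intro n _
    unfold Nat.ModEq
    rw [Nat.mod_eq_of_lt ha]
  unfold HasDensity
  have hmr : (0:ℝ) < m := by exact_mod_cast hm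
  apply tendsto_of_tendsto_of_tendsto_of_le_of_le' (g := fun x : ℕ => 1 / (m:ℝ) - 1 / x)
      (h := fun x : ℕ => 1 / (m:ℝ) + 1 / x)
  · have : Filter.Tendsto (fun x : ℕ => 1 / (x:ℝ)) Filter.atTop (nhds 0) :=
      tendsto_one_div_atTop_nhds_zero_nat
    simpa using tendsto_const_nhds.sub this
  · have : Filter.Tendsto (fun x : ℕ => 1 / (x:ℝ)) Filter.atTop (nhds 0) :=
      tendsto_one_div_atTop_nhds_zero_nat
    simpa using tendsto_const_nhds.add this
  · filter_upwards [Filter.eventually_ge_atTop 1] with x hx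
    have hxr : (0:ℝ) < x := by exact_mod_cast hx
    rw [key x, le_div_iff₀ hxr]
    have hmul : (1 / (m:ℝ) - 1 / x) * x = x / m - 1 := by
      field_simp
    rw [hmul]
    have h1 : (x:ℝ) < m * ((x / m : ℕ) : ℝ) + m := by
      have hnat : (x:ℕ) < m * (x / m) + m := by
        have h2 := Nat.div_add_mod x m
        have h3 := Nat.mod_lt x hm
        omega
      exact_mod_cast hnat
    have h4 : (x:ℝ) / m < ((x / m : ℕ) : ℝ) + 1 := by
      rw [div_lt_iff₀ hmr]
      linarith
    have h5 : (0:ℝ) ≤ ((if a % m < x % m then 1 else 0 : ℕ) : ℝ) := by positivity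
    push_cast
    push_cast at h4 h5
    linarith
  · filter_upwards [Filter.eventually_ge_atTop 1] with x hx
    have hxr : (0:ℝ) < x := by exact_mod_cast hx
    rw [key x, div_le_iff₀ hxr]
    have hmul : (1 / (m:ℝ) + 1 / x) * x = x / m + 1 := by
      field_simp
    rw [hmul]
    have hq : ((x / m : ℕ) : ℝ) ≤ (x:ℝ) / m := Nat.cast_div_le
    have he : ((if a % m < x % m then 1 else 0 : ℕ) : ℝ) ≤ 1 := by
      split <;> norm_num
    push_cast
    push_cast at hq he
    linarith

theorem b_one_values (k : ℤ) :
    HasDensity (fun n : ℕ => (r (2 * n + 2) : ℤ) - (r (2 * n + 1) : ℤ) = k)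
      (if 1 < k then 0 else if k = 1 then 1 / 4 else 3 * (2 : ℝ) ^ (k - 3)) := by
  by_cases h1 : 1 < k
  · rw [if_pos h1]
    apply hasDensity_congr (Q := fun _ => False) _ hasDensity_false
    intro n
    simp only [target_eq, iff_false]
    intro h
    have := D_le_one n
    omega
  · by_cases h2 : k = 1
    · subst h2
      rw [if_neg h1, if_pos rfl]
      apply hasDensity_congr (Q := fun n => n % 4 = 2)
      · intro n
        rw [target_eq]
        exact D_eq_one_iff n
      · have h4 := hasDensity_mod 4 2 (by norm_num) (by norm_num)
        have : (1 : ℝ) / ((4:ℕ):ℝ) = 1 / 4 := by norm_num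
        rwa [this] at h4
    · -- k ≤ 0
      have hk0 : k ≤ 0 := by omega
      set t : ℕ := (-k).toNat with hts
      have ht : (t : ℤ) = -k := Int.toNat_of_nonneg (by omega)
      have p0 : (1:ℕ) ≤ 2 ^ t := Nat.one_le_two_pow
      have q1 : (2:ℕ) ^ (t + 1) = 2 * 2 ^ t := by ring
      have q2 : (2:ℕ) ^ (t + 2) = 2 * 2 ^ (t + 1) := by ring
      have q3 : (2:ℕ) ^ (t + 3) = 2 * 2 ^ (t + 2) := by ring
      rw [if_neg h1, if_neg h2]
      apply hasDensity_congr
        (Q := fun n => n % 2 ^ (t + 2) = 2 ^ t - 1 ∨ n % 2 ^ (t + 3) = 2 ^ (t + 2) + 2 ^ (t + 1) - 1)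
      · intro n
        rw [target_eq, show k = -(t:ℤ) by omega]
        exact D_char n t
      · have hdis : ∀ n, ¬((n % 2 ^ (t + 2) = 2 ^ t - 1) ∧
            (n % 2 ^ (t + 3) = 2 ^ (t + 2) + 2 ^ (t + 1) - 1)) := by
          rintro n ⟨ha, hb⟩
          have hmm : n % 2 ^ (t + 2) = (n % 2 ^ (t + 3)) % 2 ^ (t + 2) :=
            (Nat.mod_mod_of_dvd n (pow_dvd_pow 2 (by omega))).symm
          rw [hb, show 2 ^ (t + 2) + 2 ^ (t + 1) - 1 = 2 ^ (t + 2) + (2 ^ (t + 1) - 1) by omega,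
            Nat.add_mod_left, Nat.mod_eq_of_lt (show 2 ^ (t + 1) - 1 < 2 ^ (t + 2) by omega)] at hmm
          omega
        have hd := hasDensity_or hdis
          (hasDensity_mod (2 ^ (t + 2)) (2 ^ t - 1) (by positivity) (by omega))
          (hasDensity_mod (2 ^ (t + 3)) (2 ^ (t + 2) + 2 ^ (t + 1) - 1) (by positivity) (by omega))
        have hval : (1:ℝ) / ((2 ^ (t + 2) : ℕ) : ℝ) + 1 / ((2 ^ (t + 3) : ℕ) : ℝ)
            = 3 * (2:ℝ) ^ (k - 3) := by
          rw [show k - 3 = -(((t:ℕ):ℤ) + 3) by omega]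
          rw [zpow_neg]
          have : ((t:ℤ) + 3) = ((t + 3 : ℕ) : ℤ) := by push_cast; ring
          rw [this, zpow_natCast]
          push_cast
          have hp : (0:ℝ) < (2:ℝ) ^ (t + 2) := by positivity
          have hp3 : (0:ℝ) < (2:ℝ) ^ (t + 3) := by positivity
          field_simp
          ring
        rwa [hval] at hd
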